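/- Define the worst-case objective V(p) = min over feasible top-k sets T of ∑_{j∈T} p_j. Suppose a, b ∈ [n] satisfy ℓ_a > u_b (interval a strictly dominates interval b). Let q be obtained from p ∈ [0,1]^n by transferring mass d = min{p_b, 1 − p_a} from p_b to p_a (i.e., q_b = p_b − d, q_a = p_a + d, q_r = p_r otherwise). Then V(q) ≥ V(p), ∑ q = ∑ p, q ∈ [0,1]^n, and after the transfer either q_a = 1 or q_b = 0. -/

import Mathlib

/-- Rankings consistent with strict interval dominance. -/
def FeasiblePerm (n : ℕ) (l u : Fin n → ℝ) : Set (Equiv.Perm (Fin n)) :=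
  {σ | ∀ i j : Fin n, l i > u j → σ i < σ j}

/-- Feasible top-`k` sets (0-indexed ranks). -/
def FeasibleTopK (n k : ℕ) (l u : Fin n → ℝ) : Set (Finset (Fin n)) :=
  {T | T.card = k ∧ ∃ σ ∈ FeasiblePerm n l u, ∀ j ∈ T, (σ j : ℕ) < k}

/-- if interval `a` strictly dominates interval `b` and `q` is obtained from
`p` by transferring mass `d = min (p b) (1 - p a)` from coordinate `b` to coordinate `a`,
then the worst-case objective `V(p) = min_{T feasible top-k} ∑_{j∈T} p_j` does not
decrease, the total mass is preserved, `q ∈ [0,1]^n`, and afterwards `q a = 1 ∨ q b = 0`. -/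
theorem transfer_mass_improves (n k : ℕ) (l u : Fin n → ℝ)
    (hvalid : ∀ i : Fin n, l i ≤ u i)
    (a b : Fin n) (hab : l a > u b)
    (p : Fin n → ℝ) (hp : ∀ i, 0 ≤ p i ∧ p i ≤ 1)
    (q : Fin n → ℝ)
    (hq : q = Function.update
        (Function.update p b (p b - min (p b) (1 - p a))) a
        (p a + min (p b) (1 - p a))) :
    sInf {x : ℝ | ∃ T ∈ FeasibleTopK n k l u, x = ∑ j ∈ T, p j} ≤
      sInf {x : ℝ | ∃ T ∈ FeasibleTopK n k l u, x = ∑ j ∈ T, q j} ∧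
    (∑ i, q i = ∑ i, p i) ∧
    (∀ i, 0 ≤ q i ∧ q i ≤ 1) ∧
    (q a = 1 ∨ q b = 0) := by
  have hne : a ≠ b := by
    intro h
    subst h
    exact absurd hab (not_lt.mpr (hvalid a))
  set d : ℝ := min (p b) (1 - p a) with hd
  have hd0 : 0 ≤ d := le_min (hp b).1 (by linarith [(hp a).2])
  have hdb : d ≤ p b := min_le_left _ _
  have hda : d ≤ 1 - p a := min_le_right _ _
  have hqa : q a = p a + d := by simp [hq]
  have hqb : q b = p b - d := by
    simp [hq, Function.update_of_ne (Ne.symm hne)]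
  have hqo : ∀ i, i ≠ a → i ≠ b → q i = p i := by
    intro i hia hib
    simp [hq, Function.update_of_ne hia, Function.update_of_ne hib]
  have hsplit : ∀ j, q j = p j +
      ((if j = a then d else 0) + (if j = b then -d else 0)) := by
    intro j
    by_cases hja : j = a
    · rw [hja, hqa, if_pos rfl, if_neg hne]; ring
    · by_cases hjb : j = b
      · rw [hjb, hqb, if_neg (Ne.symm hne), if_pos rfl]; ring
      · rw [hqo j hja hjb, if_neg hja, if_neg hjb]; ring
  -- key: for feasible T, ∑ p ≤ ∑ q
  have key : ∀ T ∈ FeasibleTopK n k l u, ∑ j ∈ T, p j ≤ ∑ j ∈ T, q j := by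
    rintro T ⟨hcard, σ, hσ, hT⟩
    by_cases hb : b ∈ T
    · -- then a ∈ T
      have ha : a ∈ T := by
        by_contra haT
        have hinj : Set.InjOn (fun j => (σ j : ℕ)) (insert a T : Finset (Fin n)) := by
          intro x _ y _ hxy
          exact σ.injective (Fin.ext hxy)
        have hsub : (insert a T).image (fun j => (σ j : ℕ)) ⊆ Finset.range k := by
          intro m hm
          simp only [Finset.mem_image, Finset.mem_insert] at hm
          obtain ⟨j, hj, rfl⟩ := hm
          rcases hj with hj | hj
          · rw [hj]; exact Finset.mem_range.mpr (lt_trans (hσ a b hab) (hT b hb))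
          · exact Finset.mem_range.mpr (hT j hj)
        have h1 : ((insert a T).image (fun j => (σ j : ℕ))).card = k + 1 := by
          rw [Finset.card_image_of_injOn hinj, Finset.card_insert_of_notMem haT, hcard]
        have h2 := Finset.card_le_card hsub
        rw [h1, Finset.card_range] at h2
        omega
      calc ∑ j ∈ T, p j ≤ ∑ j ∈ T, p j + 0 := by rw [add_zero]
        _ = ∑ j ∈ T, q j := by
            rw [Finset.sum_congr rfl (fun j _ => hsplit j), Finset.sum_add_distrib,
              Finset.sum_add_distrib, Finset.sum_ite_eq' T a (fun _ => d),
              Finset.sum_ite_eq' T b (fun _ => -d), if_pos ha, if_pos hb]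
            ring
    · apply Finset.sum_le_sum
      intro j hj
      rcases eq_or_ne j a with rfl | hja
      · rw [hqa]; linarith
      · rw [hqo j hja (by rintro rfl; exact hb hj)]
  refine ⟨?_, ?_, ?_, ?_⟩
  · set Sp := {x : ℝ | ∃ T ∈ FeasibleTopK n k l u, x = ∑ j ∈ T, p j} with hSp
    set Sq := {x : ℝ | ∃ T ∈ FeasibleTopK n k l u, x = ∑ j ∈ T, q j} with hSq
    have hbdd : BddBelow Sp := by
      refine ⟨0, ?_⟩
      rintro x ⟨T, _, rfl⟩
      exact Finset.sum_nonneg fun j _ => (hp j).1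
    by_cases hNE : Sq.Nonempty
    · refine le_csInf hNE ?_
      rintro x ⟨T, hT, rfl⟩
      exact le_trans (csInf_le hbdd ⟨T, hT, rfl⟩) (key T hT)
    · have hSpE : Sp = ∅ := by
        rw [Set.eq_empty_iff_forall_notMem]
        rintro x ⟨T, hT, rfl⟩
        exact hNE ⟨∑ j ∈ T, q j, T, hT, rfl⟩
      rw [hSpE, Set.not_nonempty_iff_eq_empty.mp hNE]
  · rw [Finset.sum_congr rfl (fun j _ => hsplit j), Finset.sum_add_distrib,
      Finset.sum_add_distrib, Finset.sum_ite_eq' Finset.univ a (fun _ => d),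
      Finset.sum_ite_eq' Finset.univ b (fun _ => -d), if_pos (Finset.mem_univ a),
      if_pos (Finset.mem_univ b)]
    ring
  · intro i
    by_cases hia : i = a
    · rw [hia, hqa]; constructor <;> linarith [(hp a).1]
    · by_cases hib : i = b
      · rw [hib, hqb]; constructor <;> linarith [(hp b).1, (hp b).2]
      · rw [hqo i hia hib]; exact hp i
  · rcases le_total (p b) (1 - p a) with h | h
    · right
      rw [hqb, hd, min_eq_left h]
      ring
    · left
      rw [hqa, hd, min_eq_right h]
      ring
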